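/- Existence of the regularized sum: Let f : [1,∞) → ℂ admit an asymptotic expansion f(x) ~ Σ_{j=1}^{N-1} Σ_{k=0}^{M_j} a_{jk} x^{α_j} log^k x + Σ_{k=0}^{M_0} a_{0k} log^k x + f_N(x) as x → ∞, with Re(α_j) decreasing and remainder f_N(x) = O(x^{-1-δ}) for some δ > 0. Then the partial sums Σ_{λ=1}^N f(λ) admit an asymptotic expansion of the same type in N, so that the regularized sum LIM_{N→∞} Σ_{λ=1}^N f(λ) exists. -/

import Mathlib

open MeasureTheory Filter Asymptotics

noncomputable section

/-- A term `x ^ α * (log x) ^ k` of a partie-finie asymptotic expansion. -/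
def CTerm (p : ℂ × ℕ) (x : ℝ) : ℂ :=
  (x : ℂ) ^ p.1 * (Real.log x : ℂ) ^ p.2

/-- Hadamard partie finie regularized limit as `x → ∞`: `g` has an asymptotic expansion
`g(x) ~ ∑ A p * x ^ p.1 * log x ^ p.2 + c + o(1)` where all expansion terms are
non-decaying and non-constant; `c` is the constant term `a₀₀`. -/
def HasRegLimAtTop (g : ℝ → ℂ) (c : ℂ) : Prop :=
  ∃ (s : Finset (ℂ × ℕ)) (A : ℂ × ℕ → ℂ),
    (∀ p ∈ s, 0 ≤ p.1.re ∧ p ≠ (0, 0)) ∧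
    Tendsto (fun x => g x - ∑ p ∈ s, A p * CTerm p x - c) atTop (nhds 0)

/-- Hadamard partie finie regularized limit as `x → 0⁺`. -/
def HasRegLimAtZero (g : ℝ → ℂ) (c : ℂ) : Prop :=
  ∃ (s : Finset (ℂ × ℕ)) (A : ℂ × ℕ → ℂ),
    (∀ p ∈ s, p.1.re ≤ 0 ∧ p ≠ (0, 0)) ∧
    Tendsto (fun x => g x - ∑ p ∈ s, A p * CTerm p x - c) (nhdsWithin 0 (Set.Ioi 0)) (nhds 0)

/-- `⨍_a^∞ g = v` : the regularized integral of `g` from `a` to `∞` equals `v`.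
For `a ≠ 0` it is `LIM_{R→∞} ∫_a^R g`; for `a = 0` one additionally regularizes at the
lower endpoint: `⨍_0^∞ g = LIM_{ε→0} ∫_ε^1 g + LIM_{R→∞} ∫_1^R g`. -/
def HasRegInt (g : ℝ → ℂ) (a : ℝ) (v : ℂ) : Prop :=
  (a ≠ 0 ∧ HasRegLimAtTop (fun R => ∫ x in a..R, g x) v) ∨
  (a = 0 ∧ ∃ v₀ v₁ : ℂ,
    HasRegLimAtZero (fun e => ∫ x in e..1, g x) v₀ ∧
    HasRegLimAtTop (fun R => ∫ x in (1:ℝ)..R, g x) v₁ ∧ v = v₀ + v₁)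

/-- Regularized limit of a sequence (partie finie of the expansion in `N`). -/
def HasRegLimSeq (g : ℕ → ℂ) (c : ℂ) : Prop :=
  ∃ (s : Finset (ℂ × ℕ)) (A : ℂ × ℕ → ℂ),
    (∀ p ∈ s, 0 ≤ p.1.re ∧ p ≠ (0, 0)) ∧
    Tendsto (fun N : ℕ => g N - ∑ p ∈ s, A p * CTerm p (N : ℝ) - c) atTop (nhds 0)

/-- Regularized sum `Σ-reg_{l=l₀}^∞ g l = v`, the regularized limit of partial sums. -/
def HasRegSum (g : ℕ → ℂ) (l₀ : ℕ) (v : ℂ) : Prop :=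
  HasRegLimSeq (fun N => ∑ l ∈ Finset.Icc l₀ N, g l) v

/-- The closed quarter plane minus the origin. -/
def Qset : Set (ℝ × ℝ) := {p | 0 ≤ p.1 ∧ 0 ≤ p.2} \ {0}

/-- Homogeneity of complex degree `α` on the quarter plane. -/
def Homog (f : ℝ × ℝ → ℂ) (α : ℂ) : Prop :=
  ∀ l : ℝ, 0 < l → ∀ p : ℝ × ℝ, p ∈ Qset →
    f (l * p.1, l * p.2) = (l : ℂ) ^ α * f p

/-- Taylor coefficient `c_j = (∂₁^j f)(0,1)/j!` of the expansion of `f` as `y → ∞`. -/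
def cCoef (f : ℝ × ℝ → ℂ) (j : ℕ) : ℂ :=
  (j.factorial : ℂ)⁻¹ * iteratedDerivWithin j (fun t => f (t, 1)) (Set.Ici 0) 0

/-- Taylor coefficient `d_j = (∂₂^j f)(1,0)/j!` of the expansion of `f` as `x → ∞`. -/
def dCoef (f : ℝ × ℝ → ℂ) (j : ℕ) : ℂ :=
  (j.factorial : ℂ)⁻¹ * iteratedDerivWithin j (fun t => f (1, t)) (Set.Ici 0) 0

open Classical in
/-- `c_{α+1}`: the coefficient `c_j` with `j = α + 1` if `α + 1 ∈ ℕ`, and `0` otherwise. -/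
def cCrit (f : ℝ × ℝ → ℂ) (α : ℂ) : ℂ :=
  if h : ∃ j : ℕ, α + 1 = (j : ℂ) then cCoef f h.choose else 0

open Classical in
/-- `d_{α+1}`: the coefficient `d_j` with `j = α + 1` if `α + 1 ∈ ℕ`, and `0` otherwise. -/
def dCrit (f : ℝ × ℝ → ℂ) (α : ℂ) : ℂ :=
  if h : ∃ j : ℕ, α + 1 = (j : ℂ) then dCoef f h.choose else 0

end


section RegAux
open Finset intervalIntegral
noncomputable section


def mono (β : ℂ) (i : ℕ) (t : ℝ) : ℂ := (t : ℂ) ^ β * (Real.log t : ℂ) ^ i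

lemma cterm_eq_mono (p : ℂ × ℕ) (x : ℝ) : CTerm p x = mono p.1 p.2 x := rfl

lemma mono_zero_zero (t : ℝ) : mono 0 0 t = 1 := by simp [mono]

lemma hasDerivAt_cpow_real (β : ℂ) {x : ℝ} (hx : 0 < x) :
    HasDerivAt (fun y : ℝ => (y : ℂ) ^ β) (β * (x : ℂ) ^ (β - 1)) x := by
  rcases eq_or_ne β 0 with rfl | hβ
  · simpa using (hasDerivAt_const x (1 : ℂ)).congr_of_eventuallyEq
      (by filter_upwards [eventually_mem_nhds_iff.mpr (isOpen_Ioi.mem_nhds hx)] with y hy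
          simp [Complex.cpow_zero])
  · exact hasDerivAt_ofReal_cpow_const (ne_of_gt hx) hβ
lemma hasDerivAt_logpow_c (i : ℕ) {x : ℝ} (hx : 0 < x) :
    HasDerivAt (fun y : ℝ => (Real.log y : ℂ) ^ i)
      ((i : ℂ) * (Real.log x : ℂ) ^ (i - 1) * (x : ℂ)⁻¹) x := by
  have hl : HasDerivAt Real.log x⁻¹ x := Real.hasDerivAt_log (ne_of_gt hx)
  have h1 : HasDerivAt (fun y : ℝ => (Real.log y) ^ i)
      ((i : ℝ) * (Real.log x) ^ (i - 1) * x⁻¹) x := by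
    simpa [mul_comm] using (hl.fun_pow i)
  have := h1.ofReal_comp
  refine this.congr_deriv ?_ |>.congr_of_eventuallyEq ?_
  · push_cast; ring
  · filter_upwards with y; push_cast; ring

lemma mono_hasDerivAt (β : ℂ) (i : ℕ) {x : ℝ} (hx : 0 < x) :
    HasDerivAt (mono β i) (β * mono (β - 1) i x + i * mono (β - 1) (i - 1) x) x := by
  have h := (hasDerivAt_cpow_real β hx).mul (hasDerivAt_logpow_c i hx)
  refine h.congr_deriv ?_
  have hxne : (x : ℂ) ≠ 0 := by exact_mod_cast ne_of_gt hx
  have hsub : (x : ℂ) ^ (β - 1) = (x : ℂ) ^ β * (x:ℂ)⁻¹ := by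
    rw [Complex.cpow_sub _ _ hxne, Complex.cpow_one]; ring
  simp only [mono, hsub]; ring



abbrev Combo := List (ℂ × ℂ × ℕ)

def evC (L : Combo) (t : ℝ) : ℂ := (L.map (fun e => e.1 * mono e.2.1 e.2.2 t)).sum

def dC (L : Combo) : Combo :=
  L.flatMap (fun e => [(e.1 * e.2.1, e.2.1 - 1, e.2.2), (e.1 * e.2.2, e.2.1 - 1, e.2.2 - 1)])

@[simp] lemma evC_nil (t : ℝ) : evC [] t = 0 := rfl
@[simp] lemma evC_cons (e : ℂ × ℂ × ℕ) (L : Combo) (t : ℝ) :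
    evC (e :: L) t = e.1 * mono e.2.1 e.2.2 t + evC L t := by simp [evC]

lemma evC_append (L₁ L₂ : Combo) (t : ℝ) : evC (L₁ ++ L₂) t = evC L₁ t + evC L₂ t := by
  simp [evC]

def smulC (a : ℂ) (L : Combo) : Combo := L.map (fun e => (a * e.1, e.2))

lemma evC_smulC (a : ℂ) (L : Combo) (t : ℝ) : evC (smulC a L) t = a * evC L t := by
  induction L with
  | nil => simp [smulC]
  | cons e L ih => simp [smulC] at ih ⊢; rw [ih]; ring

lemma evC_hasDerivAt (L : Combo) {x : ℝ} (hx : 0 < x) :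
    HasDerivAt (evC L) (evC (dC L) x) x := by
  induction L with
  | nil => exact hasDerivAt_const x (0 : ℂ)
  | cons e L ih =>
    have h1 := ((mono_hasDerivAt e.2.1 e.2.2 hx).const_mul e.1).add ih
    have : evC (dC (e :: L)) x
        = e.1 * (e.2.1 * mono (e.2.1 - 1) e.2.2 x + e.2.2 * mono (e.2.1 - 1) (e.2.2 - 1) x)
          + evC (dC L) x := by
      simp [dC, evC]; ring
    rw [this]
    exact HasDerivAt.congr_deriv (h1.congr_of_eventuallyEq (by filter_upwards with y; simp [evC_cons])) rfl

lemma evC_continuousAt (L : Combo) {x : ℝ} (hx : 0 < x) : ContinuousAt (evC L) x :=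
  (evC_hasDerivAt L hx).differentiableAt.continuousAt

lemma dC_append (L₁ L₂ : Combo) : dC (L₁ ++ L₂) = dC L₁ ++ dC L₂ := by
  simp [dC]

lemma dC_iter_append (j : ℕ) (L₁ L₂ : Combo) :
    dC^[j] (L₁ ++ L₂) = dC^[j] L₁ ++ dC^[j] L₂ := by
  induction j generalizing L₁ L₂ with
  | zero => rfl
  | succ j ih => rw [Function.iterate_succ_apply, dC_append, ih, Function.iterate_succ_apply, Function.iterate_succ_apply]

lemma dC_iter_mem (a : ℂ) (α : ℂ) (k : ℕ) (j : ℕ) :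
    ∀ e ∈ dC^[j] [(a, α, k)], e.2.1 = α - j ∧ e.2.2 ≤ k := by
  induction j generalizing a α k with
  | zero => intro e he; simp at he; simp [he]
  | succ j ih =>
    intro e he
    rw [Function.iterate_succ_apply] at he
    -- dC [(a,α,k)] = two entries
    have : dC [(a, α, k)] = [(a * α, α - 1, k), (a * k, α - 1, k - 1)] := by simp [dC]
    rw [this] at he
    -- dC^[j] of a two-element list = append
    have happ : dC^[j] [(a * α, α - 1, k), (a * (k:ℂ), α - 1, k - 1)]
        = dC^[j] [(a * α, α - 1, k)] ++ dC^[j] [(a * (k:ℂ), α - 1, k - 1)] := by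
      have : ([(a * α, α - 1, k), (a * (k:ℂ), α - 1, k - 1)] : Combo)
          = [(a * α, α - 1, k)] ++ [(a * (k:ℂ), α - 1, k - 1)] := rfl
      rw [this, dC_iter_append]
    rw [happ, List.mem_append] at he
    rcases he with he | he
    · have := ih (a * α) (α - 1) k e he
      refine ⟨by rw [this.1]; push_cast; ring, this.2⟩
    · have := ih (a * (k:ℂ)) (α - 1) (k - 1) e he
      exact ⟨by rw [this.1]; push_cast; ring, le_trans this.2 (Nat.sub_le k 1)⟩



lemma norm_mono {β : ℂ} {i : ℕ} {t : ℝ} (ht : 0 < t) :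
    ‖mono β i t‖ = t ^ β.re * |Real.log t| ^ i := by
  rw [mono, norm_mul, norm_pow]
  rw [Complex.norm_cpow_eq_rpow_re_of_pos ht]
  simp [Complex.norm_real, Real.norm_eq_abs]

lemma norm_mono_of_one_le {β : ℂ} {i : ℕ} {t : ℝ} (ht : 1 ≤ t) :
    ‖mono β i t‖ = t ^ β.re * (Real.log t) ^ i := by
  rw [norm_mono (lt_of_lt_of_le one_pos ht), abs_of_nonneg (Real.log_nonneg ht)]

lemma eventually_logpow_le {ε : ℝ} (hε : 0 < ε) (i : ℕ) :
    ∀ᶠ x : ℝ in atTop, (Real.log x) ^ i ≤ x ^ ε := by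
  rcases Nat.eq_zero_or_pos i with rfl | hi
  · filter_upwards [eventually_ge_atTop 1] with x hx
    simpa using Real.one_le_rpow hx (le_of_lt hε)
  · have h := (isLittleO_log_rpow_atTop (div_pos hε (by positivity : (0:ℝ) < i))).def one_pos
    filter_upwards [h, eventually_ge_atTop 1] with x hx hx1
    have hlog : 0 ≤ Real.log x := Real.log_nonneg hx1
    have : Real.log x ≤ x ^ (ε / i) := by
      simpa [Real.norm_eq_abs, abs_of_nonneg hlog,
        abs_of_nonneg (Real.rpow_nonneg (le_trans zero_le_one hx1) _)] using hx
    calc (Real.log x) ^ i ≤ (x ^ (ε / i)) ^ i := pow_le_pow_left₀ hlog this i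
      _ = x ^ ε := by
        rw [← Real.rpow_natCast (x ^ (ε/i)) i, ← Real.rpow_mul (le_trans zero_le_one hx1)]
        congr 1; field_simp

lemma summable_aux {σ : ℝ} (hσ : σ < -1) (i : ℕ) :
    Summable (fun l : ℕ => (l : ℝ) ^ σ * (Real.log l) ^ i) := by
  set ε := (-1 - σ) / 2 with hε
  have hεpos : 0 < ε := by rw [hε]; linarith
  have hlt : σ + ε < -1 := by rw [hε]; linarith
  refine Summable.of_norm_bounded_eventually_nat (g := fun l : ℕ => (l : ℝ) ^ (σ + ε))
    (Real.summable_nat_rpow.2 hlt) ?_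
  have h2 := (tendsto_natCast_atTop_atTop (R := ℝ)).eventually (eventually_logpow_le hεpos i)
  filter_upwards [h2, eventually_ge_atTop 1] with l hl hl1
  have hl1' : (1:ℝ) ≤ l := by exact_mod_cast hl1
  have hlpos : (0:ℝ) < l := lt_of_lt_of_le one_pos hl1'
  have hlog : 0 ≤ Real.log l := Real.log_nonneg hl1'
  rw [Real.norm_eq_abs, abs_of_nonneg (by positivity)]
  calc (l:ℝ) ^ σ * (Real.log l) ^ i ≤ (l:ℝ) ^ σ * (l:ℝ) ^ ε := by
        apply mul_le_mul_of_nonneg_left hl (Real.rpow_nonneg (le_of_lt hlpos) _)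
    _ = (l:ℝ) ^ (σ + ε) := (Real.rpow_add hlpos _ _).symm

lemma tendsto_mono_zero {β : ℂ} (hβ : β.re < 0) (i : ℕ) :
    Tendsto (fun N : ℕ => mono β i N) atTop (nhds 0) := by
  rw [tendsto_zero_iff_norm_tendsto_zero]
  have key : Tendsto (fun x : ℝ => x ^ β.re * (Real.log x) ^ i) atTop (nhds 0) := by
    have hε : 0 < -β.re / 2 := by linarith
    have h1 : Tendsto (fun x : ℝ => x ^ (β.re / 2)) atTop (nhds 0) := by
      have := tendsto_rpow_neg_atTop (y := -(β.re / 2)) (by linarith)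
      simpa using this
    refine squeeze_zero_norm' ?_ h1
    filter_upwards [eventually_logpow_le hε i, eventually_ge_atTop 1] with x hx hx1
    have hxpos : (0:ℝ) < x := lt_of_lt_of_le one_pos hx1
    have hlog : 0 ≤ Real.log x := Real.log_nonneg hx1
    rw [Real.norm_eq_abs, abs_of_nonneg (by positivity)]
    calc x ^ β.re * (Real.log x) ^ i ≤ x ^ β.re * x ^ (-β.re/2) :=
          mul_le_mul_of_nonneg_left hx (Real.rpow_nonneg (le_of_lt hxpos) _)
      _ = x ^ (β.re / 2) := by rw [← Real.rpow_add hxpos]; ring_nf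
  have := key.comp (tendsto_natCast_atTop_atTop (R := ℝ))
  refine Tendsto.congr' ?_ this
  filter_upwards [eventually_ge_atTop 1] with N hN
  have : (1:ℝ) ≤ (N:ℝ) := by exact_mod_cast hN
  simp [Function.comp, norm_mono_of_one_le this]



def ExpSeq (g : ℕ → ℂ) : Prop :=
  ∃ (L : Combo) (c : ℂ), Tendsto (fun N : ℕ => g N - evC L N - c) atTop (nhds 0)

lemma expSeq_congr {g g' : ℕ → ℂ} (h : ∀ᶠ N in atTop, g N = g' N) (hg : ExpSeq g) :
    ExpSeq g' := by
  obtain ⟨L, c, hL⟩ := hg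
  exact ⟨L, c, hL.congr' (by filter_upwards [h] with N hN; rw [hN])⟩

lemma expSeq_add {g g' : ℕ → ℂ} (hg : ExpSeq g) (hg' : ExpSeq g') :
    ExpSeq (fun N => g N + g' N) := by
  obtain ⟨L, c, hL⟩ := hg; obtain ⟨L', c', hL'⟩ := hg'
  refine ⟨L ++ L', c + c', ?_⟩
  have := hL.add hL'
  rw [add_zero] at this
  refine this.congr (fun N => ?_)
  rw [evC_append]; ring

lemma expSeq_mul (a : ℂ) {g : ℕ → ℂ} (hg : ExpSeq g) : ExpSeq (fun N => a * g N) := by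
  obtain ⟨L, c, hL⟩ := hg
  refine ⟨smulC a L, a * c, ?_⟩
  have := hL.const_mul a
  rw [mul_zero] at this
  refine this.congr (fun N => ?_)
  rw [evC_smulC]; ring

lemma expSeq_of_tendsto {g : ℕ → ℂ} {c : ℂ} (h : Tendsto g atTop (nhds c)) : ExpSeq g :=
  ⟨[], c, by simpa [evC, tendsto_sub_nhds_zero_iff] using h⟩

lemma expSeq_const (a : ℂ) : ExpSeq (fun _ => a) := expSeq_of_tendsto tendsto_const_nhds

lemma expSeq_evC (L : Combo) : ExpSeq (fun N : ℕ => evC L N) :=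
  ⟨L, 0, by simpa using tendsto_const_nhds⟩

lemma expSeq_sub {g g' : ℕ → ℂ} (hg : ExpSeq g) (hg' : ExpSeq g') :
    ExpSeq (fun N => g N - g' N) := by
  have := expSeq_add hg (expSeq_mul (-1) hg')
  refine expSeq_congr (by filter_upwards with N; ring_nf) this

lemma expSeq_finset_sum {ι : Type*} (s : Finset ι) (g : ι → ℕ → ℂ)
    (h : ∀ i ∈ s, ExpSeq (g i)) : ExpSeq (fun N => ∑ i ∈ s, g i N) := by
  classical
  induction s using Finset.induction_on with
  | empty => simpa using expSeq_const 0
  | insert a s' hni ih =>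
    have := expSeq_add (h a (mem_insert_self a s')) (ih (fun i hi => h i (mem_insert_of_mem hi)))
    refine expSeq_congr (by filter_upwards with N; rw [Finset.sum_insert hni]) this

lemma sum_Icc_eq_sub {M : Type*} [AddCommGroup M] (g : ℕ → M) {m N : ℕ} (h : m ≤ N + 1) :
    ∑ l ∈ Finset.Icc m N, g l = (∑ l ∈ Finset.range (N + 1), g l) - ∑ l ∈ Finset.range m, g l := by
  have := Finset.sum_Ico_consecutive g (Nat.zero_le m) h
  rw [← Finset.Ico_add_one_right_eq_Icc, Finset.range_eq_Ico, ← this, Finset.range_eq_Ico]; abel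

lemma expSeq_partial_sum {g : ℕ → ℂ} (hg : Summable g) (m : ℕ) :
    ExpSeq (fun N => ∑ l ∈ Finset.Icc m N, g l) := by
  have h1 : Tendsto (fun N : ℕ => ∑ l ∈ Finset.range (N + 1), g l) atTop (nhds (∑' l, g l)) :=
    hg.hasSum.tendsto_sum_nat.comp (tendsto_add_atTop_nat 1)
  have h2 : Tendsto (fun N : ℕ => (∑ l ∈ Finset.range (N + 1), g l) - ∑ l ∈ Finset.range m, g l)
      atTop (nhds ((∑' l, g l) - ∑ l ∈ Finset.range m, g l)) := h1.sub_const _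
  refine expSeq_congr ?_ (expSeq_of_tendsto h2)
  filter_upwards [eventually_ge_atTop m] with N hN
  rw [sum_Icc_eq_sub g (by omega)]



def Ix (j : ℕ) (L : Combo) (a : ℝ) : ℂ := ∫ t in a..(a + 1), (((t - a) ^ j : ℝ) : ℂ) * evC L t

lemma contOn (L : Combo) {a : ℝ} (ha : 0 < a) (j : ℕ) :
    ContinuousOn (fun t : ℝ => (((t - a) ^ j : ℝ) : ℂ) * evC L t) (Set.uIcc a (a + 1)) := by
  apply ContinuousOn.mul
  · fun_prop
  · intro t ht
    rw [Set.uIcc_of_le (by linarith)] at ht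
    exact (evC_continuousAt L (lt_of_lt_of_le ha ht.1)).continuousWithinAt

lemma intgr (L : Combo) {a : ℝ} (ha : 0 < a) (j : ℕ) :
    IntervalIntegrable (fun t : ℝ => (((t - a) ^ j : ℝ) : ℂ) * evC L t) volume a (a + 1) :=
  (contOn L ha j).intervalIntegrable

lemma ibp (j : ℕ) (L : Combo) {a : ℝ} (ha : 0 < a) :
    Ix j L a = ((j : ℂ) + 1)⁻¹ * (evC L (a + 1) - Ix (j + 1) (dC L) a) := by
  have hF : ∀ t ∈ Set.uIcc a (a + 1), HasDerivAt (fun t : ℝ => (((t - a) ^ (j+1) : ℝ) : ℂ) * evC L t)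
      (((j : ℂ) + 1) * (((t - a) ^ j : ℝ) : ℂ) * evC L t + (((t - a) ^ (j+1) : ℝ) : ℂ) * evC (dC L) t) t := by
    intro t ht
    rw [Set.uIcc_of_le (by linarith)] at ht
    have h1 : HasDerivAt (fun t : ℝ => (t - a) ^ (j+1)) ((j + 1 : ℝ) * (t - a) ^ j) t := by
      simpa using (((hasDerivAt_id t).sub_const a).fun_pow (j+1))
    have h2 := h1.ofReal_comp.mul (evC_hasDerivAt L (lt_of_lt_of_le ha ht.1))
    refine h2.congr_deriv ?_
    push_cast; ring
  have key := integral_eq_sub_of_hasDerivAt hF ?_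
  · have hsplit : (∫ t in a..(a+1), (((j : ℂ) + 1) * (((t - a) ^ j : ℝ) : ℂ) * evC L t
        + (((t - a) ^ (j+1) : ℝ) : ℂ) * evC (dC L) t))
        = ((j : ℂ) + 1) * Ix j L a + Ix (j+1) (dC L) a := by
      have e1 : ∀ t : ℝ, ((j : ℂ) + 1) * (((t - a) ^ j : ℝ) : ℂ) * evC L t
          = ((j : ℂ) + 1) * ((((t - a) ^ j : ℝ) : ℂ) * evC L t) := fun t => by ring
      simp_rw [e1]
      rw [integral_add ((intgr L ha j).const_mul _) (intgr (dC L) ha (j+1)), Ix, Ix,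
        intervalIntegral.integral_const_mul]
    rw [hsplit] at key
    have hj : ((j : ℂ) + 1) ≠ 0 := by
      intro h; have := congrArg Complex.re h; simp at this; linarith [this]
    have hval : ((((a + 1) - a) ^ (j+1) : ℝ) : ℂ) * evC L (a+1)
        - ((((a - a) ^ (j+1) : ℝ) : ℂ) * evC L a) = evC L (a+1) := by
      simp
    rw [hval] at key
    field_simp
    linear_combination key - Ix (j+1) (dC L) a
  · refine (ContinuousOn.intervalIntegrable ?_)
    refine ContinuousOn.add (ContinuousOn.mul (by fun_prop) ?_) (contOn (dC L) ha (j+1))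
    intro t ht
    rw [Set.uIcc_of_le (by linarith)] at ht
    exact (evC_continuousAt L (lt_of_lt_of_le ha ht.1)).continuousWithinAt

lemma unroll (L : Combo) {a : ℝ} (ha : 0 < a) (m : ℕ) :
    Ix 0 L a = (∑ j ∈ Finset.range m, ((-1 : ℂ) ^ j / (Nat.factorial (j+1) : ℂ)) * evC (dC^[j] L) (a + 1))
      + ((-1 : ℂ) ^ m / (Nat.factorial m : ℂ)) * Ix m (dC^[m] L) a := by
  induction m with
  | zero => simp
  | succ m ih =>
    rw [ih, ibp m (dC^[m] L) ha, Finset.sum_range_succ, Function.iterate_succ_apply']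
    have hm : (Nat.factorial m : ℂ) ≠ 0 := by exact_mod_cast Nat.factorial_ne_zero m
    have hm1 : (Nat.factorial (m+1) : ℂ) ≠ 0 := by exact_mod_cast Nat.factorial_ne_zero (m+1)
    have hmc : ((m : ℂ) + 1) ≠ 0 := by
      intro h; have := congrArg Complex.re h; simp at this; linarith [this]
    have hfact : (Nat.factorial (m+1) : ℂ) = ((m : ℂ) + 1) * (Nat.factorial m : ℂ) := by
      rw [Nat.factorial_succ]; push_cast; ring
    rw [hfact]
    field_simp
    ring




lemma exists_antideriv (α : ℂ) (k : ℕ) :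
    ∃ L : Combo, ∀ t : ℝ, 0 < t → HasDerivAt (evC L) (mono α k t) t := by
  rcases eq_or_ne α (-1) with rfl | hα
  · refine ⟨[(((k : ℂ) + 1)⁻¹, 0, k + 1)], fun t ht => ?_⟩
    have hk : ((k : ℂ) + 1) ≠ 0 := by
      intro h; have := congrArg Complex.re h; simp at this; linarith [this]
    have h := (mono_hasDerivAt 0 (k+1) ht).const_mul (((k : ℂ) + 1)⁻¹)
    refine (h.congr_of_eventuallyEq ?_).congr_deriv ?_
    · filter_upwards with y; simp [evC]
    · field_simp
      simp
  · have hα1 : α + 1 ≠ 0 := fun h => hα (by linear_combination h)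
    induction k with
    | zero =>
      refine ⟨[((α + 1)⁻¹, α + 1, 0)], fun t ht => ?_⟩
      have h := (mono_hasDerivAt (α+1) 0 ht).const_mul ((α + 1)⁻¹)
      refine (h.congr_of_eventuallyEq ?_).congr_deriv ?_
      · filter_upwards with y; simp [evC]
      · simp only [add_sub_cancel_right, Nat.cast_zero, zero_mul, add_zero, Nat.zero_sub]
        field_simp
    | succ k ih =>
      obtain ⟨L', hL'⟩ := ih
      refine ⟨((α + 1)⁻¹, α + 1, k + 1) :: smulC (-((k : ℂ) + 1) * (α + 1)⁻¹) L', fun t ht => ?_⟩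
      have h1 := (mono_hasDerivAt (α+1) (k+1) ht).const_mul ((α + 1)⁻¹)
      have h2 : HasDerivAt (fun t => evC (smulC (-((k : ℂ) + 1) * (α + 1)⁻¹) L') t)
          ((-((k : ℂ) + 1) * (α + 1)⁻¹) * mono α k t) t := by
        have := (hL' t ht).const_mul (-((k : ℂ) + 1) * (α + 1)⁻¹)
        refine this.congr_of_eventuallyEq ?_
        filter_upwards with y; rw [evC_smulC]
      have h3 := h1.add h2
      refine (h3.congr_of_eventuallyEq ?_).congr_deriv ?_
      · filter_upwards with y; simp
      · simp only [add_sub_cancel_right, Nat.add_sub_cancel]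
        push_cast
        field_simp
        ring



lemma norm_Ix_le (m : ℕ) (L : Combo) {a C : ℝ} (ha : 0 < a)
    (hC : ∀ t ∈ Set.Icc a (a + 1), ‖evC L t‖ ≤ C) : ‖Ix m L a‖ ≤ C := by
  have h := intervalIntegral.norm_integral_le_of_norm_le_const
    (C := C) (a := a) (b := a + 1) (f := fun t => (((t - a) ^ m : ℝ) : ℂ) * evC L t) ?_
  · rw [Ix]; simpa using h
  · intro x hx
    rw [Set.uIoc_of_le (by linarith)] at hx
    have h1 : ‖(((x - a) ^ m : ℝ) : ℂ)‖ ≤ 1 := by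
      rw [Complex.norm_real, Real.norm_eq_abs, abs_pow]
      refine pow_le_one₀ (abs_nonneg _) ?_
      rw [abs_of_nonneg (by linarith [hx.1])]
      linarith [hx.2]
    have h2 := hC x ⟨le_of_lt hx.1, hx.2⟩
    calc ‖(((x - a) ^ m : ℝ) : ℂ) * evC L x‖ = ‖(((x - a) ^ m : ℝ) : ℂ)‖ * ‖evC L x‖ := norm_mul _ _
      _ ≤ 1 * C := mul_le_mul h1 h2 (norm_nonneg _) zero_le_one
      _ = C := one_mul C

def Cb (L : Combo) (σ : ℝ) (l : ℕ) : ℝ :=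
  (L.map (fun e => ‖e.1‖ * ((2:ℝ) ^ (-σ) * ((l:ℝ) ^ σ * (Real.log l) ^ e.2.2)))).sum

lemma summable_Cb (L : Combo) {σ : ℝ} (hσ : σ < -1) : Summable (Cb L σ) := by
  induction L with
  | nil => exact (summable_zero : Summable (fun _ : ℕ => (0:ℝ)))
  | cons e L ih =>
    have h1 : Summable (fun l : ℕ => ‖e.1‖ * ((2:ℝ) ^ (-σ) * ((l:ℝ) ^ σ * (Real.log l) ^ e.2.2))) :=
      ((summable_aux hσ e.2.2).mul_left _).mul_left _
    exact h1.add ih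

lemma evC_norm_le (L : Combo) {σ : ℝ} (hexp : ∀ e ∈ L, e.2.1.re = σ) (hσ : σ ≤ 0)
    {l : ℕ} (hl : 2 ≤ l) {t : ℝ} (ht : t ∈ Set.Icc ((l:ℝ) - 1) l) : ‖evC L t‖ ≤ Cb L σ l := by
  have hl2 : (2:ℝ) ≤ (l:ℝ) := by exact_mod_cast hl
  have ht1 : (1:ℝ) ≤ t := le_trans (by linarith) ht.1
  have htl : t ≤ (l:ℝ) := ht.2
  have hth : (l:ℝ) / 2 ≤ t := le_trans (by linarith) ht.1
  induction L with
  | nil => simp [evC, Cb]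
  | cons e L ih =>
    rw [evC_cons, Cb, List.map_cons, List.sum_cons]
    refine le_trans (norm_add_le _ _) (add_le_add ?_ (ih (fun e' he' => hexp e' (List.mem_cons_of_mem _ he'))))
    rw [norm_mul, norm_mono_of_one_le ht1, hexp e (List.mem_cons_self)]
    refine mul_le_mul_of_nonneg_left ?_ (norm_nonneg _)
    have hb1 : t ^ σ ≤ (2:ℝ) ^ (-σ) * (l:ℝ) ^ σ := by
      have h1 : t ^ σ ≤ ((l:ℝ)/2) ^ σ := Real.rpow_le_rpow_of_nonpos (by linarith) hth hσ
      have h2 : ((l:ℝ)/2) ^ σ = (l:ℝ) ^ σ / (2:ℝ) ^ σ :=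
        Real.div_rpow (by positivity) (by norm_num) σ
      have h3 : (2:ℝ) ^ (-σ) = ((2:ℝ) ^ σ)⁻¹ := Real.rpow_neg (by norm_num) σ
      rw [h3]; rw [h2] at h1
      calc t ^ σ ≤ (l:ℝ) ^ σ / (2:ℝ) ^ σ := h1
        _ = ((2:ℝ) ^ σ)⁻¹ * (l:ℝ) ^ σ := by ring
    have hb2 : (Real.log t) ^ e.2.2 ≤ (Real.log l) ^ e.2.2 :=
      pow_le_pow_left₀ (Real.log_nonneg ht1) (Real.log_le_log (by linarith) htl) _
    calc t ^ σ * Real.log t ^ e.2.2 ≤ ((2:ℝ) ^ (-σ) * (l:ℝ) ^ σ) * (Real.log l) ^ e.2.2 :=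
          mul_le_mul hb1 hb2 (pow_nonneg (Real.log_nonneg ht1) _) (by positivity)
      _ = (2:ℝ) ^ (-σ) * ((l:ℝ) ^ σ * (Real.log l) ^ e.2.2) := by ring

lemma sum_Icc_one_split {M : Type*} [AddCommGroup M] (f : ℕ → M) {N : ℕ} (hN : 1 ≤ N) :
    ∑ l ∈ Finset.Icc 1 N, f l = f 1 + ∑ l ∈ Finset.Icc 2 N, f l := by
  rw [show Finset.Icc 1 N = insert 1 (Finset.Icc 2 N) by
    ext x; simp only [Finset.mem_Icc, Finset.mem_insert]; omega,
    Finset.sum_insert (by simp)]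

lemma tele (G : ℕ → ℂ) {N : ℕ} (hN : 1 ≤ N) :
    ∑ l ∈ Finset.Icc 2 N, (G l - G (l - 1)) = G N - G 1 := by
  induction N, hN using Nat.le_induction with
  | base => rw [Finset.Icc_eq_empty (by omega)]; simp
  | succ N hN ih =>
    rw [Finset.sum_Icc_succ_top (by omega), ih]
    simp only [Nat.add_sub_cancel]
    abel

lemma expSeq_sum_evC (L : Combo)
    (h : ∀ e ∈ L, ExpSeq (fun N => ∑ l ∈ Finset.Icc 1 N, mono e.2.1 e.2.2 (l : ℝ))) :
    ExpSeq (fun N => ∑ l ∈ Finset.Icc 1 N, evC L (l : ℝ)) := by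
  induction L with
  | nil => refine expSeq_congr (by filter_upwards with N; simp [evC]) (expSeq_const 0)
  | cons e L ih =>
    have h1 := expSeq_add (expSeq_mul e.1 (h e (List.mem_cons_self)))
      (ih (fun e' he' => h e' (List.mem_cons_of_mem _ he')))
    refine expSeq_congr ?_ h1
    filter_upwards with N
    have hev : ∀ l ∈ Finset.Icc 1 N, evC (e :: L) (l:ℝ)
        = e.1 * mono e.2.1 e.2.2 (l:ℝ) + evC L (l:ℝ) := fun l _ => evC_cons e L (l:ℝ)
    rw [Finset.sum_congr rfl hev, Finset.sum_add_distrib, Finset.mul_sum]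


lemma core : ∀ (n : ℕ) (α : ℂ), α.re < (n : ℝ) - 1 → ∀ (k : ℕ),
    ExpSeq (fun N => ∑ l ∈ Finset.Icc 1 N, mono α k (l : ℝ)) := by
  intro n
  induction n with
  | zero =>
    intro α hα k
    have hsum : Summable (fun l : ℕ => mono α k (l : ℝ)) := by
      refine Summable.of_norm_bounded_eventually_nat (g := fun l : ℕ => (l:ℝ) ^ α.re * (Real.log l) ^ k)
        (summable_aux (by simpa using hα) k) ?_
      filter_upwards [eventually_ge_atTop 1] with l hl
      rw [norm_mono_of_one_le (by exact_mod_cast hl)]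
    exact expSeq_partial_sum hsum 1
  | succ n ih =>
    intro α hα k
    have hα' : α.re < (n : ℝ) := by push_cast at hα; linarith
    set m := n + 2 with hm
    set L₀ : Combo := [(1, α, k)] with hL₀
    have hL0ev : ∀ t : ℝ, evC L₀ t = mono α k t := fun t => by simp [hL₀, evC]
    obtain ⟨LH, hLH⟩ := exists_antideriv α k
    set c : ℕ → ℂ := fun j => ((-1 : ℂ) ^ j / (Nat.factorial (j+1) : ℂ)) with hc
    set D : ℕ → ℝ → ℂ := fun j t => evC (dC^[j] L₀) t with hD
    set ρ : ℕ → ℂ := fun l => mono α k (l : ℝ) - (evC LH (l : ℝ) - evC LH ((l - 1 : ℕ) : ℝ))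
      + ∑ j ∈ Finset.Ico 1 m, c j * D j (l : ℝ) with hρ
    -- per-l analysis
    have hper : ∀ l : ℕ, 2 ≤ l →
        ρ l = -(((-1 : ℂ) ^ m / (Nat.factorial m : ℂ)) * Ix m (dC^[m] L₀) ((l:ℝ) - 1)) := by
      intro l hl
      have hl1 : (1:ℝ) ≤ (l:ℝ) - 1 := by
        have : (2:ℝ) ≤ (l:ℝ) := by exact_mod_cast hl
        linarith
      have ha : (0:ℝ) < (l:ℝ) - 1 := by linarith
      have hcast : ((l - 1 : ℕ) : ℝ) = (l:ℝ) - 1 := by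
        rw [Nat.cast_sub (by omega : 1 ≤ l)]; norm_num
      have hcast2 : ((l:ℝ) - 1) + 1 = (l:ℝ) := by ring
      -- FTC
      have hFTC : Ix 0 L₀ ((l:ℝ) - 1) = evC LH (l:ℝ) - evC LH ((l:ℝ) - 1) := by
        rw [Ix]
        have h1 : ∀ t ∈ Set.uIcc ((l:ℝ) - 1) (((l:ℝ) - 1) + 1),
            HasDerivAt (evC LH) ((((t - ((l:ℝ) - 1)) ^ 0 : ℝ) : ℂ) * evC L₀ t) t := by
          intro t ht
          rw [Set.uIcc_of_le (by linarith)] at ht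
          have := hLH t (by linarith [ht.1])
          simpa [hL0ev] using this
        rw [integral_eq_sub_of_hasDerivAt h1 (intgr L₀ ha 0), hcast2]
      -- unroll
      have hun := unroll L₀ ha m
      rw [hFTC] at hun
      have hsplit : ∑ j ∈ Finset.range m, c j * evC (dC^[j] L₀) (((l:ℝ) - 1) + 1)
          = evC L₀ (l:ℝ) + ∑ j ∈ Finset.Ico 1 m, c j * D j (l:ℝ) := by
        rw [Finset.range_eq_Ico, Finset.sum_eq_sum_Ico_succ_bot (by omega : 0 < m)]
        simp only [hcast2, hc, hD]
        norm_num
      rw [hcast2] at hun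
      have hsplit' : ∑ j ∈ Finset.range m, c j * evC (dC^[j] L₀) (l:ℝ)
          = evC L₀ (l:ℝ) + ∑ j ∈ Finset.Ico 1 m, c j * D j (l:ℝ) := by
        rw [← hsplit, hcast2]
      rw [hsplit'] at hun
      rw [hρ]
      simp only [hcast, hL0ev] at hun ⊢
      linear_combination -hun
    -- summability of ρ
    have hσ' : α.re - m < -1 := by push_cast at hα; push_cast [hm]; linarith
    set Lm := dC^[m] L₀ with hLm
    have hexp : ∀ e ∈ Lm, e.2.1.re = α.re - m := by
      intro e he
      have := (dC_iter_mem 1 α k m e he).1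
      rw [this]; simp
    have hρb : ∀ᶠ l : ℕ in atTop, ‖ρ l‖ ≤ Cb Lm (α.re - m) l := by
      filter_upwards [eventually_ge_atTop 2] with l hl
      rw [hper l hl, norm_neg, norm_mul]
      have h1 : ‖((-1 : ℂ) ^ m / (Nat.factorial m : ℂ))‖ ≤ 1 := by
        rw [norm_div, norm_pow, norm_neg, norm_one, one_pow]
        rw [Complex.norm_natCast]
        rw [div_le_one (by exact_mod_cast Nat.factorial_pos m)]
        exact_mod_cast Nat.one_le_iff_ne_zero.mpr (Nat.factorial_ne_zero m)
      have ha : (0:ℝ) < (l:ℝ) - 1 := by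
        have : (2:ℝ) ≤ (l:ℝ) := by exact_mod_cast hl
        linarith
      have h2 : ‖Ix m Lm ((l:ℝ) - 1)‖ ≤ Cb Lm (α.re - m) l := by
        refine norm_Ix_le m Lm ha (fun t ht => ?_)
        refine evC_norm_le Lm hexp (by linarith) hl ?_
        constructor
        · exact ht.1
        · have := ht.2; linarith [this]
      calc ‖((-1 : ℂ) ^ m / (Nat.factorial m : ℂ))‖ * ‖Ix m Lm ((l:ℝ) - 1)‖
          ≤ 1 * Cb Lm (α.re - m) l := mul_le_mul h1 h2 (norm_nonneg _) zero_le_one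
        _ = Cb Lm (α.re - m) l := one_mul _
    have hρsum : Summable ρ :=
      Summable.of_norm_bounded_eventually_nat (summable_Cb Lm hσ') hρb
    -- the N-identity
    have hid : ∀ N : ℕ, 1 ≤ N →
        ∑ l ∈ Finset.Icc 1 N, mono α k (l : ℝ)
          = (mono α k (1 : ℝ) - evC LH (1:ℝ)
              + ∑ j ∈ Finset.Ico 1 m, c j * D j (1:ℝ)) + evC LH (N : ℝ)
            - ∑ j ∈ Finset.Ico 1 m, c j * (∑ l ∈ Finset.Icc 1 N, D j (l : ℝ))
            + ∑ l ∈ Finset.Icc 2 N, ρ l := by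
      intro N hN
      have hterm : ∀ l : ℕ, mono α k (l : ℝ)
          = (evC LH (l : ℝ) - evC LH ((l - 1 : ℕ) : ℝ))
            - ∑ j ∈ Finset.Ico 1 m, c j * D j (l : ℝ) + ρ l := by
        intro l; rw [hρ]; ring
      rw [sum_Icc_one_split (fun l : ℕ => mono α k (l:ℝ)) hN]
      rw [Finset.sum_congr rfl (fun l _ => hterm l)]
      rw [Finset.sum_add_distrib, Finset.sum_sub_distrib]
      rw [tele (fun l : ℕ => evC LH (l : ℝ)) hN]
      have hswap : ∑ l ∈ Finset.Icc 2 N, ∑ j ∈ Finset.Ico 1 m, c j * D j (l : ℝ)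
          = ∑ j ∈ Finset.Ico 1 m, (c j * (∑ l ∈ Finset.Icc 1 N, D j (l : ℝ)) - c j * D j (1:ℝ)) := by
        rw [Finset.sum_comm]
        refine Finset.sum_congr rfl (fun j _ => ?_)
        rw [sum_Icc_one_split (fun l : ℕ => D j (l : ℝ)) hN, ← Finset.mul_sum]
        push_cast
        ring
      rw [hswap, Finset.sum_sub_distrib]
      push_cast
      ring
    -- assemble ExpSeq
    have F1 : ExpSeq (fun N : ℕ => evC LH (N : ℝ)) := expSeq_evC LH
    have F2 : ExpSeq (fun N : ℕ => ∑ j ∈ Finset.Ico 1 m, c j * (∑ l ∈ Finset.Icc 1 N, D j (l : ℝ))) := by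
      refine expSeq_finset_sum _ _ (fun j hj => ?_)
      refine expSeq_mul (c j) ?_
      refine expSeq_sum_evC _ (fun e he => ?_)
      have hmem := dC_iter_mem 1 α k j e he
      rw [hmem.1]
      refine ih (α - j) ?_ e.2.2
      have hj1 : 1 ≤ j := (Finset.mem_Ico.mp hj).1
      have : (α - (j:ℂ)).re = α.re - j := by simp
      rw [this]
      have : (1:ℝ) ≤ (j:ℝ) := by exact_mod_cast hj1
      linarith [hα']
    have F3 : ExpSeq (fun N : ℕ => ∑ l ∈ Finset.Icc 2 N, ρ l) := expSeq_partial_sum hρsum 2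
    have F0 : ExpSeq (fun _ : ℕ => mono α k (1 : ℝ) - evC LH (1:ℝ)
        + ∑ j ∈ Finset.Ico 1 m, c j * D j (1:ℝ)) := expSeq_const _
    have := expSeq_add (expSeq_sub (expSeq_add F0 F1) F2) F3
    refine expSeq_congr ?_ this
    filter_upwards [eventually_ge_atTop 1] with N hN
    rw [hid N hN]



lemma group (L : Combo) : ∃ (s : Finset (ℂ × ℕ)) (A : (ℂ × ℕ) → ℂ),
    (∀ q ∈ s, ∃ e ∈ L, e.2 = q) ∧
    ∀ t : ℝ, (∑ q ∈ s, A q * mono q.1 q.2 t) = evC L t := by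
  classical
  induction L with
  | nil => exact ⟨∅, fun _ => 0, by simp, fun t => by simp [evC]⟩
  | cons e L ih =>
    obtain ⟨s', A', hs', hA'⟩ := ih
    by_cases hq : e.2 ∈ s'
    · refine ⟨s', fun r => if r = e.2 then A' r + e.1 else A' r, ?_, fun t => ?_⟩
      · exact fun q hq' => (hs' q hq').imp (fun e' h => ⟨List.mem_cons_of_mem _ h.1, h.2⟩)
      · have hsplit : ∀ r ∈ s', (if r = e.2 then A' r + e.1 else A' r) * mono r.1 r.2 t
            = A' r * mono r.1 r.2 t + (if r = e.2 then e.1 * mono r.1 r.2 t else 0) := by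
          intro r _; split_ifs <;> ring
        rw [Finset.sum_congr rfl hsplit, Finset.sum_add_distrib, Finset.sum_ite_eq' s' e.2,
          if_pos hq, hA', evC_cons]
        ring
    · refine ⟨insert e.2 s', fun r => if r = e.2 then e.1 else A' r, ?_, fun t => ?_⟩
      · intro q hq'
        rcases Finset.mem_insert.mp hq' with h | h
        · exact ⟨e, List.mem_cons_self, h.symm⟩
        · exact (hs' q h).imp (fun e' h => ⟨List.mem_cons_of_mem _ h.1, h.2⟩)
      · rw [Finset.sum_insert hq, evC_cons]
        have hb : ((fun r => if r = e.2 then e.1 else A' r) e.2) = e.1 := by simp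
        rw [hb]
        congr 1
        rw [← hA' t]
        refine Finset.sum_congr rfl (fun r hr => ?_)
        have : ((fun r => if r = e.2 then e.1 else A' r) r) = A' r := by
          simp only [ite_eq_right_iff]
          intro h; exact absurd (h ▸ hr) hq
        rw [this]

lemma reduce (L : Combo) : ∃ (L' : Combo) (c' : ℂ),
    (∀ e ∈ L', 0 ≤ e.2.1.re ∧ e.2 ≠ ((0 : ℂ), (0 : ℕ))) ∧
    Tendsto (fun N : ℕ => evC L N - evC L' N - c') atTop (nhds 0) := by
  induction L with
  | nil => exact ⟨[], 0, by simp, by simpa [evC] using tendsto_const_nhds⟩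
  | cons e L ih =>
    obtain ⟨L', c', hL', hT⟩ := ih
    by_cases h1 : e.2 = ((0 : ℂ), (0 : ℕ))
    · refine ⟨L', c' + e.1, hL', ?_⟩
      refine hT.congr (fun N => ?_)
      rw [evC_cons, h1]
      simp only [mono_zero_zero]
      ring
    · by_cases h2 : 0 ≤ e.2.1.re
      · refine ⟨e :: L', c', fun e' he' => ?_, ?_⟩
        · rcases List.mem_cons.mp he' with h | h
          · exact h ▸ ⟨h2, h1⟩
          · exact hL' e' h
        · refine hT.congr (fun N => ?_)
          rw [evC_cons, evC_cons]
          ring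
      · push_neg at h2
        refine ⟨L', c', hL', ?_⟩
        have := hT.add ((tendsto_mono_zero h2 e.2.2).const_mul e.1)
        simp only [mul_zero, add_zero] at this
        refine this.congr (fun N => ?_)
        rw [evC_cons]
        ring

theorem stmt_3' (f : ℝ → ℂ) (s : Finset (ℂ × ℕ)) (A : ℂ × ℕ → ℂ) (δ : ℝ) (hδ : 0 < δ)
    (hexp : (fun x : ℝ => f x - ∑ p ∈ s, A p * CTerm p x)
      =O[atTop] fun x : ℝ => x ^ (-1 - δ)) :
    (∃ c : ℂ, HasRegLimSeq (fun N => ∑ l ∈ Finset.Icc 1 N, f (l : ℝ)) c) := by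
  classical
  set r : ℝ → ℂ := fun x => f x - ∑ p ∈ s, A p * CTerm p x with hr
  have hrsum : Summable (fun l : ℕ => r (l : ℝ)) := by
    have hO : (fun l : ℕ => r (l : ℝ)) =O[atTop] fun l : ℕ => ((l : ℝ)) ^ (-1 - δ) :=
      hexp.comp_tendsto tendsto_natCast_atTop_atTop
    refine summable_of_isBigO_nat (Real.summable_nat_rpow.2 (by linarith)) hO
  have hES : ExpSeq (fun N => ∑ l ∈ Finset.Icc 1 N, f (l : ℝ)) := by
    have h1 : ExpSeq (fun N => ∑ p ∈ s, A p * ∑ l ∈ Finset.Icc 1 N, CTerm p (l : ℝ)) := by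
      refine expSeq_finset_sum _ _ (fun p _ => expSeq_mul (A p) ?_)
      obtain ⟨n, hn⟩ := exists_nat_gt (p.1.re + 1)
      exact core n p.1 (by linarith) p.2
    have h2 := expSeq_add h1 (expSeq_partial_sum hrsum 1)
    refine expSeq_congr ?_ h2
    filter_upwards with N
    have hf : ∀ l ∈ Finset.Icc 1 N, f (l : ℝ)
        = (∑ p ∈ s, A p * CTerm p (l : ℝ)) + r (l : ℝ) := fun l _ => by rw [hr]; ring
    rw [Finset.sum_congr rfl hf, Finset.sum_add_distrib, Finset.sum_comm]
    congr 1
    refine Finset.sum_congr rfl (fun p _ => ?_)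
    rw [Finset.mul_sum]
  obtain ⟨L, c, hT⟩ := hES
  obtain ⟨L', c', hL', hT'⟩ := reduce L
  obtain ⟨s₂, A₂, hs₂, hA₂⟩ := group L'
  refine ⟨c + c', s₂, A₂, fun q hq => ?_, ?_⟩
  · obtain ⟨e, heL, heq⟩ := hs₂ q hq
    exact heq ▸ hL' e heL
  · have := hT.add hT'
    rw [add_zero] at this
    refine this.congr (fun N => ?_)
    rw [show (∑ p ∈ s₂, A₂ p * CTerm p (N : ℝ)) = evC L' N from hA₂ N]
    ring

end

end RegAux

/-- Existence of the regularized sum (first part of Proposition `PRegSum`). -/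
theorem stmt_3 (f : ℝ → ℂ) (s : Finset (ℂ × ℕ)) (A : ℂ × ℕ → ℂ) (δ : ℝ) (hδ : 0 < δ)
    (hexp : (fun x : ℝ => f x - ∑ p ∈ s, A p * CTerm p x)
      =O[atTop] fun x : ℝ => x ^ (-1 - δ)) :
    (∃ c : ℂ, HasRegLimSeq (fun N => ∑ l ∈ Finset.Icc 1 N, f (l : ℝ)) c) :=
  stmt_3' f s A δ hδ hexp
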